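/- Let F be a block filter on E, ⟨X⟩ ∈ F, and α a strategy for player II in the restricted Gowers game G_F[X]. Then there is a tree T ⊆ E^[<∞] such that: (i) every infinite branch of T is an outcome of α (i.e., [T] ⊆ [α]); and (ii) whenever t ∈ T (including the empty sequence) and ⟨Y⟩ ∈ F, there is y ∈ ⟨Y⟩ such that the extension of t by y belongs to T. -/

import Mathlib

namespace BlockPaper

variable {F : Type} [Field F]

/-- `X` is an infinite block sequence in `E = ⊕ₙ F`. -/
def IsBlock (X : ℕ → (ℕ →₀ F)) : Prop :=
  (∀ n, X n ≠ 0) ∧ ∀ n, ∀ i ∈ (X n).support, ∀ j ∈ (X (n + 1)).support, i < j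

/-- `⟨X⟩`: the linear span of the entries of `X`, with `0` removed. -/
def spanSet (X : ℕ → (ℕ →₀ F)) : Set (ℕ →₀ F) :=
  {v | v ≠ 0 ∧ v ∈ Submodule.span F (Set.range X)}

/-- `⟨X/n⟩`: the span (minus `0`) of the entries of `X` whose supports lie entirely above `n`. -/
def tailSpanSet (X : ℕ → (ℕ →₀ F)) (n : ℕ) : Set (ℕ →₀ F) :=
  {v | v ≠ 0 ∧ v ∈ Submodule.span F {x : ℕ →₀ F | (∃ k, X k = x) ∧ ∀ i ∈ x.support, n < i}}

/-- `X ⪯ Y`. -/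
def PLE (X Y : ℕ → (ℕ →₀ F)) : Prop := spanSet X ⊆ spanSet Y

/-- `X ⪯* Y`. -/
def PLEs (X Y : ℕ → (ℕ →₀ F)) : Prop := ∃ n, tailSpanSet X n ⊆ spanSet Y

/-- A block filter on `E`: a proper filter of subsets of `E ∖ {0}` containing all
finite-codimensional subspaces (minus `0`) and with a base of sets `⟨X⟩`, `X ∈ E^[∞]`. -/
structure BlockFilter (F : Type) [Field F] where
  sets : Set (Set (ℕ →₀ F))
  nonzero : ∀ S ∈ sets, ∀ v ∈ S, v ≠ 0
  proper : ∅ ∉ sets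
  upward : ∀ S ∈ sets, ∀ T : Set (ℕ →₀ F), (∀ v ∈ T, v ≠ 0) → S ⊆ T → T ∈ sets
  inter : ∀ S ∈ sets, ∀ T ∈ sets, S ∩ T ∈ sets
  codim : ∀ V : Submodule F (ℕ →₀ F), Module.Finite F ((ℕ →₀ F) ⧸ V) →
    {v : ℕ →₀ F | v ≠ 0 ∧ v ∈ V} ∈ sets
  blockBase : ∀ S ∈ sets, ∃ X : ℕ → (ℕ →₀ F),
    IsBlock X ∧ spanSet X ∈ sets ∧ spanSet X ⊆ S

/-- `D ⊆ E` is `𝓕`-dense. -/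
def FDense (𝓕 : BlockFilter F) (D : Set (ℕ →₀ F)) : Prop :=
  ∀ X : ℕ → (ℕ →₀ F), IsBlock X → spanSet X ∈ 𝓕.sets →
    ∃ V : Submodule F (ℕ →₀ F), ¬ Module.Finite F V ∧
      (V : Set (ℕ →₀ F)) \ {0} ⊆ spanSet X ∩ D

/-- `𝓕` is full: every `𝓕`-dense set belongs to `𝓕`. -/
def Full (𝓕 : BlockFilter F) : Prop :=
  ∀ D : Set (ℕ →₀ F), FDense 𝓕 D → D \ {0} ∈ 𝓕.sets

/-- `𝓕` is a `(p)`-filter. -/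
def PFilter (𝓕 : BlockFilter F) : Prop :=
  ∀ Xs : ℕ → ℕ → (ℕ →₀ F), (∀ n, IsBlock (Xs n) ∧ spanSet (Xs n) ∈ 𝓕.sets) →
    ∃ X : ℕ → (ℕ →₀ F), IsBlock X ∧ spanSet X ∈ 𝓕.sets ∧ ∀ n, PLEs X (Xs n)

/-- `𝓕` is a `(p⁺)`-filter: full and a `(p)`-filter. -/
def PPlus (𝓕 : BlockFilter F) : Prop := Full 𝓕 ∧ PFilter 𝓕

/-- A finite block sequence in `E`, as a list. -/
def IsBlockList (l : List (ℕ →₀ F)) : Prop :=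
  (∀ v ∈ l, v ≠ 0) ∧
    l.Chain' (fun u v : ℕ →₀ F => ∀ i ∈ u.support, ∀ j ∈ v.support, i < j)

/-- `𝓕` is a strong `(p)`-filter: any family `(X_x⃗)` indexed by finite block sequences,
with each `⟨X_x⃗⟩ ∈ 𝓕`, has a diagonalization `X` with `X/x⃗ ⪯ X_x⃗` for all finite initial
segments `x⃗` of `X`. -/
def StrongP (𝓕 : BlockFilter F) : Prop :=
  ∀ Xs : List (ℕ →₀ F) → ℕ → (ℕ →₀ F),
    (∀ l, IsBlockList l → IsBlock (Xs l) ∧ spanSet (Xs l) ∈ 𝓕.sets) →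
    ∃ X : ℕ → (ℕ →₀ F), IsBlock X ∧ spanSet X ∈ 𝓕.sets ∧
      ∀ k : ℕ, PLE (fun m => X (m + k)) (Xs (List.ofFn fun i : Fin k => X i))

/-- The outcome of a strategy (for II) against a sequence of opposing moves:
the `k`-th value is the strategy applied to the first `k+1` opposing moves. -/
def outcomeOf {α β : Type*} (st : List α → β) (Ys : ℕ → α) : ℕ → β :=
  fun k => st (List.ofFn fun i : Fin (k + 1) => Ys i)

/-- A legal move for player I in the Gowers game `G[X]`. -/
def LegalG (X Y : ℕ → (ℕ →₀ F)) : Prop := IsBlock Y ∧ PLE Y X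

/-- A legal move for player I in the restricted Gowers game `G_𝓕[X]`. -/
def LegalGF (𝓕 : BlockFilter F) (X Y : ℕ → (ℕ →₀ F)) : Prop :=
  IsBlock Y ∧ PLE Y X ∧ spanSet Y ∈ 𝓕.sets

/-- `α` is a strategy for player II in a Gowers-type game whose legal moves for I are
given by `legal`: against any sequence of legal I-moves, the outcome is a block
sequence whose `k`-th entry lies in the span of I's `k`-th move. -/
def IsStratII (legal : (ℕ → (ℕ →₀ F)) → Prop)
    (α : List (ℕ → (ℕ →₀ F)) → (ℕ →₀ F)) : Prop :=
  ∀ Ys : ℕ → ℕ → (ℕ →₀ F), (∀ k, legal (Ys k)) →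
    IsBlock (outcomeOf α Ys) ∧ ∀ k, outcomeOf α Ys k ∈ spanSet (Ys k)

/-- `𝓕` is strategic. -/
def Strategic (𝓕 : BlockFilter F) : Prop :=
  ∀ X : ℕ → (ℕ →₀ F), IsBlock X → spanSet X ∈ 𝓕.sets →
    ∀ α, IsStratII (LegalG X) α →
      ∃ Ys : ℕ → ℕ → (ℕ →₀ F), (∀ k, LegalG X (Ys k)) ∧
        spanSet (outcomeOf α Ys) ∈ 𝓕.sets

/-- `𝓕` is `+`-strategic. -/
def PlusStrategic (𝓕 : BlockFilter F) : Prop :=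
  ∀ X : ℕ → (ℕ →₀ F), IsBlock X → spanSet X ∈ 𝓕.sets →
    ∀ α, IsStratII (LegalGF 𝓕 X) α →
      ∃ Ys : ℕ → ℕ → (ℕ →₀ F), (∀ k, LegalGF 𝓕 X (Ys k)) ∧
        spanSet (outcomeOf α Ys) ∈ 𝓕.sets

/-- A legal finite position (list of II's moves so far) in a play where I follows `σ`. -/
def LegalPos (σ : List (ℕ →₀ F) → ℕ → (ℕ →₀ F)) (l : List (ℕ →₀ F)) : Prop :=
  IsBlockList l ∧ ∀ k, (h : k < l.length) → l.get ⟨k, h⟩ ∈ spanSet (σ (l.take k))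

/-- `σ` is a strategy for player I in the restricted Gowers game `G_𝓕[X]`. -/
def IsStratIGF (𝓕 : BlockFilter F) (X : ℕ → (ℕ →₀ F))
    (σ : List (ℕ →₀ F) → ℕ → (ℕ →₀ F)) : Prop :=
  ∀ l, LegalPos σ l → LegalGF 𝓕 X (σ l)

/-- `ys` is (the sequence of II's moves of) an infinite play against I's strategy `σ`
in a Gowers-type game; its outcome is `ys` itself. -/
def PlayAgainstI (σ : List (ℕ →₀ F) → ℕ → (ℕ →₀ F)) (ys : ℕ → (ℕ →₀ F)) : Prop :=
  IsBlock ys ∧ ∀ k, ys k ∈ spanSet (σ (List.ofFn fun i : Fin k => ys i))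

/-- `ys` is an infinite play against I's strategy `σ` in the asymptotic game `F[X]`. -/
def PlayAgainstIAsymp (X : ℕ → (ℕ →₀ F)) (σ : List (ℕ →₀ F) → ℕ)
    (ys : ℕ → (ℕ →₀ F)) : Prop :=
  IsBlock ys ∧ ∀ k, ys k ∈ spanSet X ∧
    ∀ i ∈ (ys k).support, σ (List.ofFn fun j : Fin k => ys j) < i

/-- `FIN`: nonempty finite subsets of `ℕ`. -/
abbrev FIN := {s : Finset ℕ // s.Nonempty}

/-- An infinite block sequence in `FIN`. -/
def IsBlockF (A : ℕ → Finset ℕ) : Prop :=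
  (∀ n, (A n).Nonempty) ∧ ∀ n, ∀ i ∈ A n, ∀ j ∈ A (n + 1), i < j

/-- `⟨A⟩`: unions of finitely many (at least one) entries of `A`. -/
def finUnions (A : ℕ → Finset ℕ) : Set (Finset ℕ) :=
  {b | ∃ G : Finset ℕ, G.Nonempty ∧ b = G.sup A}

/-- `⟨A/n⟩`: unions of finitely many entries of `A` contained in `(n, ∞)`. -/
def finUnionsAbove (A : ℕ → Finset ℕ) (n : ℕ) : Set (Finset ℕ) :=
  {b | ∃ G : Finset ℕ, G.Nonempty ∧ (∀ k ∈ G, ∀ i ∈ A k, n < i) ∧ b = G.sup A}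

/-- `A ⪯ B` in `FIN`. -/
def PLEF (A B : ℕ → Finset ℕ) : Prop := finUnions A ⊆ finUnions B

/-- `A ⪯* B` in `FIN`. -/
def PLEsF (A B : ℕ → Finset ℕ) : Prop := ∃ n, finUnionsAbove A n ⊆ finUnions B

/-- Lift a set of finite subsets of `ℕ` to a set of elements of `FIN`. -/
def liftFIN (S : Set (Finset ℕ)) : Set FIN := {a | (a : Finset ℕ) ∈ S}

/-- `U` is an ordered-union ultrafilter on `FIN`. -/
def OrderedUnion (U : Ultrafilter FIN) : Prop :=
  ∀ S ∈ U, ∃ A : ℕ → Finset ℕ, IsBlockF A ∧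
    liftFIN (finUnions A) ∈ U ∧ liftFIN (finUnions A) ⊆ S

/-- `U` is stable. -/
def Stable (U : Ultrafilter FIN) : Prop :=
  ∀ As : ℕ → ℕ → Finset ℕ, (∀ n, IsBlockF (As n) ∧ liftFIN (finUnions (As n)) ∈ U) →
    ∃ B : ℕ → Finset ℕ, IsBlockF B ∧ liftFIN (finUnions B) ∈ U ∧ ∀ n, PLEsF B (As n)

/-- `supp(X)`: the sequence of supports of the entries of `X`. -/
def suppSeq (X : ℕ → (ℕ →₀ F)) : ℕ → Finset ℕ := fun k => (X k).support

/-- `supp(𝓕)`: the collection of `A ⊆ FIN` containing `{supp v : v ∈ S}` for some `S ∈ 𝓕`. -/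
def suppFilter (𝓕 : BlockFilter F) : Set (Set FIN) :=
  {A | ∃ S ∈ 𝓕.sets, ∀ a : FIN, (∃ v ∈ S, (a : Finset ℕ) = v.support) → a ∈ A}

/-- A finite block sequence in `FIN`, as a list. -/
def IsBlockListF (l : List (Finset ℕ)) : Prop :=
  (∀ a ∈ l, a.Nonempty) ∧
    l.Chain' (fun a b : Finset ℕ => ∀ i ∈ a, ∀ j ∈ b, i < j)


section Stmt18Aux

variable (𝓕 : BlockFilter F) (X : ℕ → (ℕ →₀ F)) (α : List (ℕ → (ℕ →₀ F)) → (ℕ →₀ F))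

open Classical in
noncomputable def pick18 (L : List (ℕ → (ℕ →₀ F))) (y : ℕ →₀ F) : ℕ → (ℕ →₀ F) :=
  if h : ∃ Y, LegalGF 𝓕 X Y ∧ α (L ++ [Y]) = y then h.choose else X

lemma pick18_spec {L : List (ℕ → (ℕ →₀ F))} {y : ℕ →₀ F}
    (h : ∃ Y, LegalGF 𝓕 X Y ∧ α (L ++ [Y]) = y) :
    LegalGF 𝓕 X (pick18 𝓕 X α L y) ∧ α (L ++ [pick18 𝓕 X α L y]) = y := by
  rw [pick18, dif_pos h]; exact h.choose_spec

/-- The canonical sequence of I-moves leading to position `l`. -/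
noncomputable def W18 (l : List (ℕ →₀ F)) : List (ℕ → (ℕ →₀ F)) :=
  l.foldl (fun L y => L ++ [pick18 𝓕 X α L y]) []

lemma W18_append (l : List (ℕ →₀ F)) (y : ℕ →₀ F) :
    W18 𝓕 X α (l ++ [y]) = W18 𝓕 X α l ++ [pick18 𝓕 X α (W18 𝓕 X α l) y] := by
  simp [W18, List.foldl_append]

/-- The tree of positions reachable against canonical I-moves. -/
def TT18 : Set (List (ℕ →₀ F)) :=
  {l | ∀ j, (h : j < l.length) → ∃ Y, LegalGF 𝓕 X Y ∧
      α (W18 𝓕 X α (l.take j) ++ [Y]) = l.get ⟨j, h⟩}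

lemma W18_eq_ofFn (Ys : ℕ → ℕ → (ℕ →₀ F)) (l : List (ℕ →₀ F))
    (hYs : ∀ j, (h : j < l.length) →
      Ys j = pick18 𝓕 X α (W18 𝓕 X α (l.take j)) (l.get ⟨j, h⟩)) :
    ∀ k, k ≤ l.length → W18 𝓕 X α (l.take k) = List.ofFn fun i : Fin k => Ys i := by
  intro k
  induction k with
  | zero => intro _; simp [W18]
  | succ k ih =>
    intro hk
    have hk' : k < l.length := hk
    have h1 : l.take (k + 1) = l.take k ++ [l.get ⟨k, hk'⟩] := by
      rw [← List.take_concat_get hk']; simp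
    rw [h1, W18_append, ← hYs k hk', ih (le_of_lt hk'),
      List.ofFn_succ' fun i : Fin (k + 1) => Ys i]
    simp

lemma TT18_main {l : List (ℕ →₀ F)} (hl : l ∈ TT18 𝓕 X α)
    (Yinf : ℕ → ℕ → (ℕ →₀ F)) (hYinf : ∀ k, LegalGF 𝓕 X (Yinf k)) :
    ∃ Ys : ℕ → ℕ → (ℕ →₀ F), (∀ k, LegalGF 𝓕 X (Ys k)) ∧
      (∀ j, (h : j < l.length) → outcomeOf α Ys j = l.get ⟨j, h⟩) ∧
      (∀ k, l.length ≤ k → Ys k = Yinf k) ∧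
      W18 𝓕 X α l = List.ofFn fun i : Fin l.length => Ys i := by
  set Ys : ℕ → ℕ → (ℕ →₀ F) := fun j => if h : j < l.length then
      pick18 𝓕 X α (W18 𝓕 X α (l.take j)) (l.get ⟨j, h⟩) else Yinf j with hYsdef
  have hYs : ∀ j, (h : j < l.length) →
      Ys j = pick18 𝓕 X α (W18 𝓕 X α (l.take j)) (l.get ⟨j, h⟩) := by
    intro j h; rw [hYsdef]; simp only [dif_pos h]
  have hW := W18_eq_ofFn 𝓕 X α Ys l hYs
  refine ⟨Ys, ?_, ?_, ?_, ?_⟩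
  · intro k
    by_cases h : k < l.length
    · rw [hYs k h]; exact (pick18_spec 𝓕 X α (hl k h)).1
    · rw [hYsdef]; simp only [dif_neg h]; exact hYinf k
  · intro j h
    have h2 : (List.ofFn fun i : Fin (j + 1) => Ys i) =
        W18 𝓕 X α (l.take j) ++ [pick18 𝓕 X α (W18 𝓕 X α (l.take j)) (l.get ⟨j, h⟩)] := by
      rw [List.ofFn_succ' fun i : Fin (j + 1) => Ys i, List.concat_eq_append]
      simp only [Fin.coe_castSucc, Fin.val_last]
      rw [← hYs j h, hW j (le_of_lt h)]
    show α _ = _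
    rw [h2]
    exact (pick18_spec 𝓕 X α (hl j h)).2
  · intro k hk; rw [hYsdef]; simp only [dif_neg (Nat.not_lt.mpr hk)]
  · have := hW l.length le_rfl
    rwa [List.take_length] at this

lemma ofFn_take18 {β : Type*} (Z : ℕ → β) {j k : ℕ} (h : j ≤ k) :
    (List.ofFn fun i : Fin k => Z i).take j = List.ofFn fun i : Fin j => Z i := by
  apply List.ext_getElem
  · simp; omega
  · intro n h1 h2
    simp only [List.getElem_take, List.getElem_ofFn]

end Stmt18Aux

end BlockPaper
open BlockPaper in
/-- Given a block filter `𝓕`, `⟨X⟩ ∈ 𝓕` and a strategy `α` for II in `G_𝓕[X]`,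
there is a tree `T ⊆ E^[<∞]` all of whose branches are outcomes of `α` and such that
every node of `T` can be extended into `T` by a vector from any prescribed `⟨Y⟩ ∈ 𝓕`. -/
theorem stmt18 {F : Type} [Field F] [Countable F] (𝓕 : BlockFilter F)
    (X : ℕ → (ℕ →₀ F)) (hX : IsBlock X) (hXF : spanSet X ∈ 𝓕.sets)
    (α : List (ℕ → (ℕ →₀ F)) → (ℕ →₀ F)) (hα : IsStratII (LegalGF 𝓕 X) α) :
    ∃ T : Set (List (ℕ →₀ F)),
      (∀ l ∈ T, IsBlockList l) ∧
      ([] ∈ T) ∧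
      (∀ l ∈ T, ∀ t, t <+: l → t ∈ T) ∧
      (∀ Z : ℕ → (ℕ →₀ F), (∀ k, (List.ofFn fun i : Fin k => Z i) ∈ T) →
        ∃ Ys : ℕ → ℕ → (ℕ →₀ F), (∀ k, LegalGF 𝓕 X (Ys k)) ∧ outcomeOf α Ys = Z) ∧
      (∀ l ∈ T, ∀ Y : ℕ → (ℕ →₀ F), IsBlock Y → spanSet Y ∈ 𝓕.sets →
        ∃ y ∈ spanSet Y, l ++ [y] ∈ T) := by
  classical
  have hXX : LegalGF 𝓕 X X := ⟨hX, fun _ h => h, hXF⟩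
  refine ⟨TT18 𝓕 X α, ?_, ?_, ?_, ?_, ?_⟩
  · -- block lists
    intro l hl
    obtain ⟨Ys, hleg, hout, -, -⟩ := TT18_main 𝓕 X α hl (fun _ => X) (fun _ => hXX)
    obtain ⟨hB, hmem⟩ := hα Ys hleg
    constructor
    · intro v hv
      obtain ⟨⟨j, hj⟩, rfl⟩ := List.mem_iff_get.mp hv
      rw [← hout j hj]
      exact (hmem j).1
    · apply List.isChain_iff_getElem.mpr
      intro i hi
      have h1 : i < l.length := by omega
      have h2 : i + 1 < l.length := by omega
      have := hB.2 i
      rw [hout i h1, hout (i + 1) h2] at this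
      exact this
  · -- empty
    intro j h; simp at h
  · -- prefix closed
    rintro l hl t ⟨s, rfl⟩ j h
    have h' : j < (t ++ s).length := by simp; omega
    obtain ⟨Y, hY, hαY⟩ := hl j h'
    refine ⟨Y, hY, ?_⟩
    rwa [List.take_append_of_le_length (le_of_lt h), List.get_eq_getElem, List.getElem_append_left h] at hαY
  · -- branches
    intro Z hZ
    set Ys : ℕ → ℕ → (ℕ →₀ F) := fun j =>
      pick18 𝓕 X α (W18 𝓕 X α (List.ofFn fun i : Fin j => Z i)) (Z j) with hYsdef
    have hpick : ∀ k, LegalGF 𝓕 X (Ys k) ∧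
        α (W18 𝓕 X α (List.ofFn fun i : Fin k => Z i) ++ [Ys k]) = Z k := by
      intro k
      have hk : k < (List.ofFn fun i : Fin (k + 1) => Z i).length := by simp
      obtain ⟨Y, hY, hαY⟩ := hZ (k + 1) k hk
      rw [ofFn_take18 Z (Nat.le_succ k)] at hαY
      have hget : (List.ofFn fun i : Fin (k + 1) => Z i).get ⟨k, hk⟩ = Z k := by
        simp only [List.get_eq_getElem, List.getElem_ofFn]
      rw [hget] at hαY
      exact pick18_spec 𝓕 X α ⟨Y, hY, hαY⟩
    have hW : ∀ k, W18 𝓕 X α (List.ofFn fun i : Fin k => Z i) =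
        List.ofFn fun i : Fin k => Ys i := by
      intro k
      have := W18_eq_ofFn 𝓕 X α Ys (List.ofFn fun i : Fin k => Z i) ?_ k (by simp)
      · rwa [ofFn_take18 Z (le_refl k)] at this
      · intro j hj
        have hj' : j < k := by simpa using hj
        rw [ofFn_take18 Z (le_of_lt hj')]
        have : (List.ofFn fun i : Fin k => Z i).get ⟨j, hj⟩ = Z j := by
          simp only [List.get_eq_getElem, List.getElem_ofFn]
        rw [this]
    refine ⟨Ys, fun k => (hpick k).1, ?_⟩
    funext k
    show α (List.ofFn fun i : Fin (k + 1) => Ys i) = Z k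
    rw [List.ofFn_succ' fun i : Fin (k + 1) => Ys i]
    have : (List.ofFn fun i : Fin k => (fun i : Fin (k+1) => Ys i) i.castSucc) =
        List.ofFn fun i : Fin k => Ys i := by simp
    rw [List.concat_eq_append, this, ← hW k]
    exact (hpick k).2
  · -- extension
    intro l hl Y hYb hYF
    obtain ⟨Y'', hY''b, hY''F, hY''sub⟩ := 𝓕.blockBase _ (𝓕.inter _ hYF _ hXF)
    have hY''leg : LegalGF 𝓕 X Y'' := ⟨hY''b, fun v hv => (hY''sub hv).2, hY''F⟩
    obtain ⟨Ys, hleg, hout, htail, hW⟩ :=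
      TT18_main 𝓕 X α hl (fun _ => Y'') (fun _ => hY''leg)
    obtain ⟨hB, hmem⟩ := hα Ys hleg
    set y := outcomeOf α Ys l.length with hy
    have hyY : y ∈ spanSet Y := by
      have := hmem l.length
      rw [htail l.length le_rfl] at this
      exact (hY''sub this).1
    refine ⟨y, hyY, ?_⟩
    intro j h
    have hlen : j < l.length + 1 := by simpa using h
    rcases Nat.lt_or_ge j l.length with hj | hj
    · obtain ⟨Y', hY', hαY'⟩ := hl j hj
      refine ⟨Y', hY', ?_⟩
      rw [List.take_append_of_le_length (le_of_lt hj), List.get_eq_getElem, List.getElem_append_left hj]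
      exact hαY'
    · have hje : j = l.length := by omega
      subst hje
      refine ⟨Ys l.length, hleg _, ?_⟩
      have ht : (l ++ [y]).take l.length = l := List.take_left
      have hg : (l ++ [y]).get ⟨l.length, h⟩ = y := by
        simp
      rw [ht, hg, hW]
      show α _ = y
      rw [hy]
      show _ = α (List.ofFn fun i : Fin (l.length + 1) => Ys i)
      rw [List.ofFn_succ' fun i : Fin (l.length + 1) => Ys i]
      simp
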